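/- Let v be a C² function on an open subset of ℝⁿ, f a C² function on ℝ, and for y = (y₁,…,y_n,y_{n+1}) with y_{n+1} > 0 set ỹ = (y₁/y_{n+1},…,y_n/y_{n+1}) and φ(y) = f(y_{n+1} v(ỹ)). Then the determinant of the (n+1)×(n+1) Hessian of φ satisfies det D²φ(y) = f''(y_{n+1}v(ỹ)) · (f'(y_{n+1}v(ỹ)))ⁿ · v(ỹ)² · y_{n+1}^{−n} · det D²v(ỹ). -/

import Mathlib

open Set MeasureTheory Metric Bornology
open scoped RealInnerProductSpace NNReal Topology

noncomputable section

abbrev Eu (n : ℕ) := EuclideanSpace ℝ (Fin n)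

/-- The Hessian matrix of second partial derivatives of a function on `ℝᵐ`. -/
def Hess {m : ℕ} (f : Eu m → ℝ) (y : Eu m) : Matrix (Fin m) (Fin m) ℝ :=
  fun i j =>
    fderiv ℝ (fun z => fderiv ℝ f z (EuclideanSpace.single i (1:ℝ))) y
      (EuclideanSpace.single j (1:ℝ))

/-- The first `n` coordinates `ȳ` of a point of `ℝ^{n+1}`. -/
def bar {n : ℕ} (y : Eu (n + 1)) : Eu n := WithLp.toLp 2 (fun i : Fin n => y i.castSucc)

/-- The last coordinate `y_{n+1}` of a point of `ℝ^{n+1}`. -/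
def lastc {n : ℕ} (y : Eu (n + 1)) : ℝ := y (Fin.last n)

/-- The rescaled point `ỹ = ȳ / y_{n+1}` on the link. -/
def tilde {n : ℕ} (y : Eu (n + 1)) : Eu n := (lastc y)⁻¹ • bar y

def barL (n : ℕ) : Eu (n + 1) →L[ℝ] Eu n :=
  LinearMap.toContinuousLinearMap
    { toFun := bar
      map_add' := fun _ _ => rfl
      map_smul' := fun _ _ => by ext i; simp [bar] }

def lastL (n : ℕ) : Eu (n + 1) →L[ℝ] ℝ :=
  LinearMap.toContinuousLinearMap
    { toFun := lastc
      map_add' := fun _ _ => rfl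
      map_smul' := fun _ _ => rfl }

@[simp] lemma barL_apply {n : ℕ} (x : Eu (n+1)) : barL n x = bar x := rfl
@[simp] lemma lastL_apply {n : ℕ} (x : Eu (n+1)) : lastL n x = lastc x := rfl

lemma bar_single_castSucc {n : ℕ} (k : Fin n) :
    bar (EuclideanSpace.single k.castSucc (1:ℝ)) = EuclideanSpace.single k (1:ℝ) := by
  ext j
  simp [bar, EuclideanSpace.single_apply, Fin.castSucc_inj]

lemma bar_single_last {n : ℕ} :
    bar (EuclideanSpace.single (Fin.last n) (1:ℝ)) = 0 := by
  ext j
  simp [bar, EuclideanSpace.single_apply, (Fin.castSucc_lt_last j).ne]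

lemma lastc_single_castSucc {n : ℕ} (k : Fin n) :
    lastc (EuclideanSpace.single k.castSucc (1:ℝ)) = 0 := by
  simp [lastc, EuclideanSpace.single_apply]

lemma lastc_single_last {n : ℕ} :
    lastc (EuclideanSpace.single (Fin.last n) (1:ℝ)) = 1 := by
  simp [lastc, EuclideanSpace.single_apply]

section DetSpecial
open Matrix


private lemma sum_eq2 {n : ℕ} {f g : Fin n → ℝ} (h : ∀ i, f i = g i) :
    ∑ i, f i = ∑ i, g i := Finset.sum_congr rfl fun i _ => h i

private lemma fac_lemma {n : ℕ} (M : Matrix (Fin n) (Fin n) ℝ) (d t : Fin n → ℝ)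
    (a q w s : ℝ) (hw : w ≠ 0) (T2 : ℝ) (hT2 : 0 < 1 + T2) (c : ℝ) (hc : c = w / (1 + T2)) :
    Matrix.fromBlocks
      (Matrix.of fun k l => q * d k * d l + a * M k l)
      (Matrix.of fun k (_ : Fin 1) => q * (w - s) * d k - a * ∑ m, t m * M k m)
      (Matrix.of fun (_ : Fin 1) l => q * (w - s) * d l - a * ∑ m, t m * M m l)
      (Matrix.of fun (_ : Fin 1) (_ : Fin 1) =>
        q * (w - s) ^ 2 + a * ∑ k, ∑ m, t k * t m * M m k)
    = (Matrix.fromBlocks (1 : Matrix (Fin n) (Fin n) ℝ)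
        (Matrix.of fun k (_ : Fin 1) => d k / c)
        (Matrix.of fun (_ : Fin 1) l => -t l)
        (Matrix.of fun (_ : Fin 1) (_ : Fin 1) => (1 + T2) * (w - s) / w))
      * (Matrix.fromBlocks (a • M) (0 : Matrix (Fin n) (Fin 1) ℝ)
        (0 : Matrix (Fin 1) (Fin n) ℝ)
        (Matrix.of fun (_ : Fin 1) (_ : Fin 1) => q * c ^ 2))
      * (Matrix.fromBlocks (1 : Matrix (Fin n) (Fin n) ℝ)
        (Matrix.of fun k (_ : Fin 1) => d k / c)
        (Matrix.of fun (_ : Fin 1) l => -t l)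
        (Matrix.of fun (_ : Fin 1) (_ : Fin 1) => (1 + T2) * (w - s) / w))ᵀ := by
  subst hc
  have h1T : (1 + T2) ≠ 0 := ne_of_gt hT2
  rw [Matrix.fromBlocks_transpose, Matrix.fromBlocks_multiply, Matrix.fromBlocks_multiply]
  ext i j
  rcases i with k | u <;> rcases j with l | u' <;>
  simp only [Matrix.fromBlocks_apply₁₁, Matrix.fromBlocks_apply₁₂,
      Matrix.fromBlocks_apply₂₁, Matrix.fromBlocks_apply₂₂, Matrix.add_apply, Matrix.mul_apply,
      Matrix.of_apply, Matrix.one_apply, Matrix.zero_apply, Matrix.transpose_apply,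
      Matrix.smul_apply, smul_eq_mul, Fin.sum_univ_one, mul_zero, add_zero, zero_add,
      mul_ite, mul_one, ite_mul, zero_mul, Finset.sum_ite_eq, Finset.mem_univ, if_true,
      Finset.sum_ite_eq', Finset.sum_const_zero, one_mul]
  · field_simp
    ring
  · have e1 : ∑ x, (a * M k x) * -t x = -(a * ∑ m, t m * M k m) := by
      rw [Finset.mul_sum, ← Finset.sum_neg_distrib]
      exact sum_eq2 fun m => by ring
    rw [e1]
    field_simp
    ring
  · have e1 : ∑ x, -t x * (a * M x l) = -(a * ∑ m, t m * M m l) := by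
      rw [Finset.mul_sum, ← Finset.sum_neg_distrib]
      exact sum_eq2 fun m => by ring
    rw [e1]
    field_simp
    ring
  · have e2 : ∑ x, (∑ x1, -t x1 * (a * M x1 x)) * -t x
        = ∑ x, ∑ x1, a * (t x * t x1 * M x1 x) := by
      refine sum_eq2 fun x => ?_
      rw [Finset.sum_mul]
      exact sum_eq2 fun x1 => by ring
    have e3 : a * ∑ k, ∑ m, t k * t m * M m k = ∑ k, ∑ m, a * (t k * t m * M m k) := by
      rw [Finset.mul_sum]
      exact sum_eq2 fun k => Finset.mul_sum _ _ _
    rw [e2, e3]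
    field_simp
    ring

private theorem det_special {n : ℕ} (M : Matrix (Fin n) (Fin n) ℝ) (d t : Fin n → ℝ)
    (a q w s : ℝ) (hs : s = ∑ m, t m * d m) :
    (Matrix.fromBlocks
      (Matrix.of fun k l => q * d k * d l + a * M k l)
      (Matrix.of fun k (_ : Fin 1) => q * (w - s) * d k - a * ∑ m, t m * M k m)
      (Matrix.of fun (_ : Fin 1) l => q * (w - s) * d l - a * ∑ m, t m * M m l)
      (Matrix.of fun (_ : Fin 1) (_ : Fin 1) =>
        q * (w - s) ^ 2 + a * ∑ k, ∑ m, t k * t m * M m k)).det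
      = q * a ^ n * w ^ 2 * M.det := by
  rcases eq_or_ne w 0 with hw | hw
  · have hdet : (Matrix.fromBlocks
      (Matrix.of fun k l => q * d k * d l + a * M k l)
      (Matrix.of fun k (_ : Fin 1) => q * (w - s) * d k - a * ∑ m, t m * M k m)
      (Matrix.of fun (_ : Fin 1) l => q * (w - s) * d l - a * ∑ m, t m * M m l)
      (Matrix.of fun (_ : Fin 1) (_ : Fin 1) =>
        q * (w - s) ^ 2 + a * ∑ k, ∑ m, t k * t m * M m k)).det = 0 := by
      rw [← Matrix.exists_mulVec_eq_zero_iff]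
      refine ⟨Sum.elim t (fun _ => 1), ?_, ?_⟩
      · intro h
        have := congrFun h (Sum.inr 0)
        simp at this
      · funext i
        rcases i with k | u
        · simp only [Matrix.mulVec, dotProduct, Fintype.sum_sum_type,
            Matrix.fromBlocks_apply₁₁, Matrix.fromBlocks_apply₁₂, Matrix.of_apply,
            Sum.elim_inl, Sum.elim_inr, Finset.univ_unique, Finset.sum_const,
            Finset.card_singleton, one_smul, Pi.zero_apply]
          have e1 : ∑ m, (q * d k * d m + a * M k m) * t m
              = q * d k * s + ∑ m, a * (t m * M k m) := by
            rw [hs, Finset.mul_sum, ← Finset.sum_add_distrib]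
            exact sum_eq2 fun m => by ring
          rw [e1, hw, Finset.mul_sum]; ring
        · simp only [Matrix.mulVec, dotProduct, Fintype.sum_sum_type,
            Matrix.fromBlocks_apply₂₁, Matrix.fromBlocks_apply₂₂, Matrix.of_apply,
            Sum.elim_inl, Sum.elim_inr, Finset.univ_unique, Finset.sum_const,
            Finset.card_singleton, one_smul, Pi.zero_apply]
          have e1 : ∑ l, (q * (w - s) * d l - a * ∑ m, t m * M m l) * t l
              = q * (w - s) * s - ∑ l, ∑ m, a * (t l * (t m * M m l)) := by
            rw [hs, Finset.mul_sum, ← Finset.sum_sub_distrib]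
            refine sum_eq2 fun l => ?_
            rw [sub_mul, Finset.mul_sum]
            congr 1
            · ring
            · rw [Finset.sum_mul]
              exact sum_eq2 fun m => by ring
          rw [e1, hw]
          have e2 : a * ∑ k, ∑ m, t k * t m * M m k = ∑ l, ∑ m, a * (t l * (t m * M m l)) := by
            rw [Finset.mul_sum]
            refine sum_eq2 fun l => ?_
            rw [Finset.mul_sum]
            exact sum_eq2 fun m => by ring
          rw [e2]
          ring
    rw [hdet, hw]; ring
  · have hT2 : (0:ℝ) < 1 + ∑ m, t m ^ 2 := by positivity
    have h1T : (1 + ∑ m, t m ^ 2) ≠ 0 := ne_of_gt hT2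
    rw [fac_lemma M d t a q w s hw _ hT2 (w / (1 + ∑ m, t m ^ 2)) rfl]
    rw [Matrix.det_mul, Matrix.det_mul, Matrix.det_transpose]
    have hdetR : (Matrix.fromBlocks (1 : Matrix (Fin n) (Fin n) ℝ)
        (Matrix.of fun k (_ : Fin 1) => d k / (w / (1 + ∑ m, t m ^ 2)))
        (Matrix.of fun (_ : Fin 1) l => -t l)
        (Matrix.of fun (_ : Fin 1) (_ : Fin 1) =>
          (1 + ∑ m, t m ^ 2) * (w - s) / w)).det = 1 + ∑ m, t m ^ 2 := by
      rw [Matrix.det_fromBlocks_one₁₁, Matrix.det_fin_one]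
      simp only [Matrix.sub_apply, Matrix.mul_apply, Matrix.of_apply, Fin.sum_univ_one]
      have e : ∑ m, -t m * (d m / (w / (1 + ∑ m, t m ^ 2)))
          = -(s * (1 + ∑ m, t m ^ 2) / w) := by
        have h1 : ∀ m : Fin n, -t m * (d m / (w / (1 + ∑ m, t m ^ 2)))
            = -(t m * d m * ((1 + ∑ m, t m ^ 2) / w)) := fun m => by
          rw [div_div_eq_mul_div]
          ring
        rw [sum_eq2 h1, Finset.sum_neg_distrib, ← Finset.sum_mul, hs, mul_div_assoc]
      rw [e]
      field_simp
      ring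
    have hdetD : (Matrix.fromBlocks (a • M) (0 : Matrix (Fin n) (Fin 1) ℝ)
        (0 : Matrix (Fin 1) (Fin n) ℝ)
        (Matrix.of fun (_ : Fin 1) (_ : Fin 1) =>
          q * (w / (1 + ∑ m, t m ^ 2)) ^ 2)).det
        = a ^ n * M.det * (q * (w / (1 + ∑ m, t m ^ 2)) ^ 2) := by
      rw [Matrix.det_fromBlocks_zero₂₁, Matrix.det_smul, Matrix.det_fin_one]
      simp [Fintype.card_fin]
    rw [hdetR, hdetD]
    field_simp

end DetSpecial

lemma clm_expand {n : ℕ} (c : Eu n →L[ℝ] ℝ) (x : Eu n) :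
    c x = ∑ m, x m * c (EuclideanSpace.single m (1:ℝ)) := by
  have hx : (∑ m, x m • EuclideanSpace.single m (1:ℝ)) = x := by
    ext j
    rw [WithLp.ofLp_sum, Finset.sum_apply]
    simp [EuclideanSpace.single_apply]
  conv_lhs => rw [← hx]
  rw [map_sum]
  exact Finset.sum_congr rfl fun m _ => by rw [_root_.map_smul]; simp


open Matrix in
set_option maxHeartbeats 1000000 in
/-- If `v` is `C²` on an open `U ⊂ ℝⁿ`, `f` is `C²` on `ℝ`, and
`φ(y) = f(y_{n+1} v(ỹ))`, then at every `y` with `y_{n+1} > 0` and `ỹ ∈ U`,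
`det D²φ(y) = f''(y_{n+1}v(ỹ)) (f'(y_{n+1}v(ỹ)))ⁿ v(ỹ)² y_{n+1}^{-n} det D²v(ỹ)`. -/
theorem det_hessian_separation_of_variables {n : ℕ} (U : Set (Eu n)) (hU : IsOpen U)
    (v : Eu n → ℝ) (hv : ContDiffOn ℝ 2 v U) (f : ℝ → ℝ) (hf : ContDiff ℝ 2 f)
    (y : Eu (n + 1)) (hy : 0 < lastc y) (hyU : tilde y ∈ U) :
    (Hess (fun z => f (lastc z * v (tilde z))) y).det =
      deriv (deriv f) (lastc y * v (tilde y)) *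
        (deriv f (lastc y * v (tilde y))) ^ n *
        (v (tilde y)) ^ 2 * ((lastc y) ^ n)⁻¹ * (Hess v (tilde y)).det := by
  classical
  have hrne : lastc y ≠ 0 := ne_of_gt hy
  set B := barL n with hB
  set L := lastL n with hL
  set Dv := fderiv ℝ v with hDv
  have hvAt : ∀ x ∈ U, HasFDerivAt v (Dv x) x := fun x hx =>
    ((hv.contDiffAt (hU.mem_nhds hx)).differentiableAt (by norm_num)).hasFDerivAt
  set A2 := fderiv ℝ Dv (tilde y) with hA2def
  have hDvC1 : ContDiffAt ℝ 1 Dv (tilde y) := by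
    have h1 := hv.contDiffAt (hU.mem_nhds hyU)
    exact h1.fderiv_right (m := 1) (by norm_num)
  have hA2 : HasFDerivAt Dv A2 (tilde y) :=
    (hDvC1.differentiableAt (by norm_num)).hasFDerivAt
  -- derivative of tilde
  set T : Eu (n+1) → (Eu (n+1) →L[ℝ] Eu n) := fun z =>
    (lastc z)⁻¹ • B + ((-(lastc z ^ 2)⁻¹) • L).smulRight (bar z) with hT
  have hTz : ∀ z : Eu (n+1), lastc z ≠ 0 → HasFDerivAt tilde (T z) z := by
    intro z hz
    have h0 : HasDerivAt (fun x : ℝ => x⁻¹) (-(lastc z ^ 2)⁻¹) (lastc z) := hasDerivAt_inv hz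
    have h1 : HasFDerivAt (fun w : Eu (n+1) => (lastc w)⁻¹) ((-(lastc z ^ 2)⁻¹) • L) z :=
      h0.comp_hasFDerivAt z L.hasFDerivAt
    exact h1.smul B.hasFDerivAt
  -- derivative of g
  set g : Eu (n+1) → ℝ := fun z => lastc z * v (tilde z) with hgdef
  set G : Eu (n+1) → (Eu (n+1) →L[ℝ] ℝ) := fun z =>
    lastc z • ((Dv (tilde z)).comp (T z)) + v (tilde z) • L with hGdef
  have hgz : ∀ z, lastc z ≠ 0 → tilde z ∈ U → HasFDerivAt g (G z) z := by
    intro z h1 h2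
    have hd : HasFDerivAt (fun w => v (tilde w)) ((Dv (tilde z)).comp (T z)) z :=
      (hvAt _ h2).comp z (hTz z h1)
    exact L.hasFDerivAt.mul hd
  -- facts about f
  have hfd : ∀ x : ℝ, HasDerivAt f (deriv f x) x := fun x =>
    ((hf.differentiable (by norm_num)).differentiableAt).hasDerivAt
  have hf11 : ContDiff ℝ ((1 : WithTop ℕ∞) + 1) f := by
    have h12 : ((1 : WithTop ℕ∞) + 1) = 2 := one_add_one_eq_two
    rw [h12]; exact hf
  have hf1 : ContDiff ℝ 1 (deriv f) := (contDiff_succ_iff_deriv.mp hf11).2.2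
  have hfd2 : ∀ x : ℝ, HasDerivAt (deriv f) (deriv (deriv f) x) x := fun x =>
    ((hf1.differentiable (by norm_num)).differentiableAt).hasDerivAt
  -- derivative of φ
  have hφz : ∀ z, lastc z ≠ 0 → tilde z ∈ U →
      HasFDerivAt (fun w => f (lastc w * v (tilde w))) (deriv f (g z) • G z) z := fun z h1 h2 =>
    (hfd (g z)).comp_hasFDerivAt z (hgz z h1 h2)
  -- eventual facts
  have hevne : ∀ᶠ z in 𝓝 y, lastc z ≠ 0 :=
    L.continuous.continuousAt.eventually_ne hrne
  have hconttilde : ContinuousAt tilde y :=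
    (L.continuous.continuousAt.inv₀ hrne).smul B.continuous.continuousAt
  have hevU : ∀ᶠ z in 𝓝 y, tilde z ∈ U :=
    hconttilde.preimage_mem_nhds (hU.mem_nhds hyU)
  have hev : ∀ᶠ z in 𝓝 y,
      fderiv ℝ (fun w => f (lastc w * v (tilde w))) z = deriv f (g z) • G z := by
    filter_upwards [hevne, hevU] with z h1 h2
    exact (hφz z h1 h2).fderiv
  -- values of T on basis vectors
  have hTcs : ∀ z : Eu (n+1), ∀ k : Fin n,
      T z (EuclideanSpace.single k.castSucc 1) = (lastc z)⁻¹ • EuclideanSpace.single k (1:ℝ) := by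
    intro z k
    simp [hT, hB, hL, ContinuousLinearMap.add_apply, ContinuousLinearMap.smul_apply,
      ContinuousLinearMap.smulRight_apply, bar_single_castSucc, lastc_single_castSucc]
  have hTlast : ∀ z : Eu (n+1), lastc z ≠ 0 →
      T z (EuclideanSpace.single (Fin.last n) 1) = -((lastc z)⁻¹ • tilde z) := by
    intro z hz
    have h2 : ((lastc z) ^ 2)⁻¹ • bar z = (lastc z)⁻¹ • tilde z := by
      show ((lastc z) ^ 2)⁻¹ • bar z = (lastc z)⁻¹ • ((lastc z)⁻¹ • bar z)
      rw [smul_smul, sq, mul_inv]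
    simp [hT, hB, hL, ContinuousLinearMap.add_apply, ContinuousLinearMap.smul_apply,
      ContinuousLinearMap.smulRight_apply, bar_single_last, lastc_single_last, ← h2, neg_smul]
  -- values of G on basis vectors
  have hGcs : ∀ z : Eu (n+1), lastc z ≠ 0 → ∀ k : Fin n,
      G z (EuclideanSpace.single k.castSucc 1) = Dv (tilde z) (EuclideanSpace.single k 1) := by
    intro z hz k
    simp [hGdef, hL, ContinuousLinearMap.add_apply, ContinuousLinearMap.smul_apply,
      ContinuousLinearMap.comp_apply, hTcs z k, lastc_single_castSucc, _root_.map_smul]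
    field_simp
  have hGlast : ∀ z : Eu (n+1), lastc z ≠ 0 →
      G z (EuclideanSpace.single (Fin.last n) 1) = v (tilde z) - Dv (tilde z) (tilde z) := by
    intro z hz
    simp [hGdef, hL, ContinuousLinearMap.add_apply, ContinuousLinearMap.smul_apply,
      ContinuousLinearMap.comp_apply, hTlast z hz, lastc_single_last, _root_.map_neg,
      _root_.map_smul]
    field_simp
    ring
  -- derivative of z ↦ Dv z u at tilde y
  have hDvk : ∀ u : Eu n, HasFDerivAt (fun x => Dv x u) (A2.flip u) (tilde y) := by
    intro u
    have h := hA2.clm_apply (hasFDerivAt_const u (tilde y))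
    simpa using h
  have hc' : HasFDerivAt (fun z => deriv f (g z)) (deriv (deriv f) (g y) • G y) y :=
    (hfd2 (g y)).comp_hasFDerivAt y (hgz y hrne hyU)
  -- Hessian rows for i = castSucc k
  have hHcs : ∀ (k : Fin n) (j : Fin (n+1)),
      Hess (fun z => f (lastc z * v (tilde z))) y k.castSucc j
      = deriv f (g y) * (A2 (T y (EuclideanSpace.single j 1)) (EuclideanSpace.single k 1))
        + Dv (tilde y) (EuclideanSpace.single k 1)
          * (deriv (deriv f) (g y) * G y (EuclideanSpace.single j 1)) := by
    intro k j
    have hFcs : HasFDerivAt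
        (fun z => deriv f (g z) * Dv (tilde z) (EuclideanSpace.single k 1))
        (deriv f (g y) • ((A2.flip (EuclideanSpace.single k 1)).comp (T y))
          + (Dv (tilde y) (EuclideanSpace.single k 1)) • (deriv (deriv f) (g y) • G y)) y := by
      have hd : HasFDerivAt (fun z => Dv (tilde z) (EuclideanSpace.single k 1))
          ((A2.flip (EuclideanSpace.single k 1)).comp (T y)) y :=
        (hDvk _).comp y (hTz y hrne)
      exact hc'.mul hd
    have heq : (fun z => fderiv ℝ (fun w => f (lastc w * v (tilde w))) z
        (EuclideanSpace.single k.castSucc 1)) =ᶠ[𝓝 y]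
        (fun z => deriv f (g z) * Dv (tilde z) (EuclideanSpace.single k 1)) := by
      filter_upwards [hevne, hevU, hev] with z h1 h2 h3
      rw [h3, ContinuousLinearMap.smul_apply, hGcs z h1 k, smul_eq_mul]
    simp only [Hess]
    rw [heq.fderiv_eq, hFcs.fderiv]
    simp [ContinuousLinearMap.add_apply, ContinuousLinearMap.smul_apply,
      ContinuousLinearMap.comp_apply, ContinuousLinearMap.flip_apply]
  -- Hessian row for i = last
  have hHlast : ∀ j : Fin (n+1),
      Hess (fun z => f (lastc z * v (tilde z))) y (Fin.last n) j
      = deriv f (g y) * (-(A2 (T y (EuclideanSpace.single j 1)) (tilde y)))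
        + (v (tilde y) - Dv (tilde y) (tilde y))
          * (deriv (deriv f) (g y) * G y (EuclideanSpace.single j 1)) := by
    intro j
    have hDvtilde : HasFDerivAt (fun z => Dv (tilde z)) (A2.comp (T y)) y :=
      hA2.comp y (hTz y hrne)
    have hFlast : HasFDerivAt
        (fun z => deriv f (g z) * (v (tilde z) - Dv (tilde z) (tilde z)))
        (deriv f (g y) • (((Dv (tilde y)).comp (T y))
            - (((Dv (tilde y)).comp (T y)) + (A2.comp (T y)).flip (tilde y)))
          + (v (tilde y) - Dv (tilde y) (tilde y)) • (deriv (deriv f) (g y) • G y)) y := by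
      have h1 : HasFDerivAt (fun z => v (tilde z)) ((Dv (tilde y)).comp (T y)) y :=
        (hvAt _ hyU).comp y (hTz y hrne)
      have h2 : HasFDerivAt (fun z => Dv (tilde z) (tilde z))
          (((Dv (tilde y)).comp (T y)) + (A2.comp (T y)).flip (tilde y)) y :=
        hDvtilde.clm_apply (hTz y hrne)
      exact hc'.mul (h1.sub h2)
    have heq : (fun z => fderiv ℝ (fun w => f (lastc w * v (tilde w))) z
        (EuclideanSpace.single (Fin.last n) 1)) =ᶠ[𝓝 y]
        (fun z => deriv f (g z) * (v (tilde z) - Dv (tilde z) (tilde z))) := by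
      filter_upwards [hevne, hevU, hev] with z h1 h2 h3
      rw [h3, ContinuousLinearMap.smul_apply, hGlast z h1, smul_eq_mul]
    simp only [Hess]
    rw [heq.fderiv_eq, hFlast.fderiv]
    simp [ContinuousLinearMap.add_apply, ContinuousLinearMap.sub_apply,
      ContinuousLinearMap.smul_apply, ContinuousLinearMap.comp_apply,
      ContinuousLinearMap.flip_apply]
  -- expansions and final assembly
  have hs : Dv (tilde y) (tilde y)
      = ∑ m, tilde y m * Dv (tilde y) (EuclideanSpace.single m 1) :=
    clm_expand (Dv (tilde y)) (tilde y)
  have hHv : ∀ k l : Fin n, Hess v (tilde y) k l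
      = A2 (EuclideanSpace.single l 1) (EuclideanSpace.single k 1) := by
    intro k l
    simp only [Hess]
    rw [← hDv, (hDvk (EuclideanSpace.single k 1)).fderiv]
    simp
  have hA2fst : ∀ u : Eu n, A2 (tilde y) u
      = ∑ m, tilde y m * A2 (EuclideanSpace.single m 1) u := by
    intro u
    have h := clm_expand (A2.flip u) (tilde y)
    simpa using h
  have hA2snd : ∀ x : Eu n, A2 x (tilde y)
      = ∑ m, tilde y m * A2 x (EuclideanSpace.single m 1) :=
    fun x => clm_expand (A2 x) (tilde y)
  have hinl : ∀ k : Fin n, finSumFinEquiv (Sum.inl k : Fin n ⊕ Fin 1) = k.castSucc :=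
    fun k => rfl
  have hinr : ∀ u : Fin 1, finSumFinEquiv (Sum.inr u : Fin n ⊕ Fin 1) = Fin.last n := by
    intro u
    ext
    simp [Fin.last]
  have hblock : Hess (fun z => f (lastc z * v (tilde z))) y
      = Matrix.reindex finSumFinEquiv finSumFinEquiv (Matrix.fromBlocks
        (Matrix.of fun k l => deriv (deriv f) (g y)
            * Dv (tilde y) (EuclideanSpace.single k 1) * Dv (tilde y) (EuclideanSpace.single l 1)
          + (deriv f (g y) * (lastc y)⁻¹) * Hess v (tilde y) k l)
        (Matrix.of fun k (_ : Fin 1) => deriv (deriv f) (g y)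
            * (v (tilde y) - Dv (tilde y) (tilde y)) * Dv (tilde y) (EuclideanSpace.single k 1)
          - (deriv f (g y) * (lastc y)⁻¹) * ∑ m, tilde y m * Hess v (tilde y) k m)
        (Matrix.of fun (_ : Fin 1) l => deriv (deriv f) (g y)
            * (v (tilde y) - Dv (tilde y) (tilde y)) * Dv (tilde y) (EuclideanSpace.single l 1)
          - (deriv f (g y) * (lastc y)⁻¹) * ∑ m, tilde y m * Hess v (tilde y) m l)
        (Matrix.of fun (_ : Fin 1) (_ : Fin 1) => deriv (deriv f) (g y)
            * (v (tilde y) - Dv (tilde y) (tilde y)) ^ 2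
          + (deriv f (g y) * (lastc y)⁻¹)
            * ∑ k, ∑ m, tilde y k * tilde y m * Hess v (tilde y) m k)) := by
    ext i j
    obtain ⟨i', rfl⟩ := finSumFinEquiv.surjective i
    obtain ⟨j', rfl⟩ := finSumFinEquiv.surjective j
    rw [Matrix.reindex_apply, Matrix.submatrix_apply, Equiv.symm_apply_apply,
      Equiv.symm_apply_apply]
    rcases i' with k | u <;> rcases j' with l | u'
    · rw [hinl, hinl, Matrix.fromBlocks_apply₁₁, Matrix.of_apply,
        hHcs k l.castSucc, hTcs y l, hGcs y hrne l, hHv k l]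
      simp only [_root_.map_smul, ContinuousLinearMap.smul_apply, smul_eq_mul]
      ring
    · rw [hinl, hinr, Matrix.fromBlocks_apply₁₂, Matrix.of_apply,
        hHcs k (Fin.last n), hTlast y hrne, hGlast y hrne]
      have e1 : (∑ m, tilde y m * Hess v (tilde y) k m)
          = ∑ m, tilde y m * A2 (EuclideanSpace.single m 1) (EuclideanSpace.single k 1) :=
        sum_eq2 fun m => by rw [hHv k m]
      rw [e1, ← hA2fst (EuclideanSpace.single k 1)]
      simp only [_root_.map_neg, _root_.map_smul, ContinuousLinearMap.neg_apply,
        ContinuousLinearMap.smul_apply, smul_eq_mul]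
      ring
    · rw [hinr, hinl, Matrix.fromBlocks_apply₂₁, Matrix.of_apply,
        hHlast l.castSucc, hTcs y l, hGcs y hrne l]
      have e1 : (∑ m, tilde y m * Hess v (tilde y) m l)
          = ∑ m, tilde y m * A2 (EuclideanSpace.single l 1) (EuclideanSpace.single m 1) :=
        sum_eq2 fun m => by rw [hHv m l]
      rw [e1, ← hA2snd (EuclideanSpace.single l 1)]
      simp only [_root_.map_smul, ContinuousLinearMap.smul_apply, smul_eq_mul]
      ring
    · rw [hinr, hinr, Matrix.fromBlocks_apply₂₂, Matrix.of_apply,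
        hHlast (Fin.last n), hTlast y hrne, hGlast y hrne]
      have e1 : (∑ k, ∑ m, tilde y k * tilde y m * Hess v (tilde y) m k)
          = ∑ k, ∑ m, tilde y k * tilde y m
              * A2 (EuclideanSpace.single k 1) (EuclideanSpace.single m 1) :=
        sum_eq2 fun k => sum_eq2 fun m => by rw [hHv m k]
      have e2 : A2 (tilde y) (tilde y)
          = ∑ k, ∑ m, tilde y k * tilde y m
              * A2 (EuclideanSpace.single k 1) (EuclideanSpace.single m 1) := by
        rw [hA2fst (tilde y)]
        refine sum_eq2 fun k => ?_
        rw [hA2snd (EuclideanSpace.single k 1), Finset.mul_sum]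
        exact sum_eq2 fun m => by ring
      rw [e1, ← e2]
      simp only [_root_.map_neg, _root_.map_smul, ContinuousLinearMap.neg_apply,
        ContinuousLinearMap.smul_apply, smul_eq_mul]
      ring
  have hds := det_special (Hess v (tilde y))
      (fun k => Dv (tilde y) (EuclideanSpace.single k 1)) (fun m => tilde y m)
      (deriv f (g y) * (lastc y)⁻¹) (deriv (deriv f) (g y)) (v (tilde y))
      (Dv (tilde y) (tilde y)) hs
  rw [hblock, Matrix.det_reindex_self]
  beta_reduce at hds
  rw [hds]
  have hgy : g y = lastc y * v (tilde y) := rfl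
  rw [hgy]
  rw [mul_pow, inv_pow]
  ring
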